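/- For every ε > 0 and every integer r ≥ 5, if a_r = ((2r-8)·((r-4)!)²·((r-1)!))^(1/(3r+1)) and b_r = ((r-2)!)^(1/(r+1)), then a_r < b_r, and consequently a_r^n = o(b_r^n) as n → ∞; that is, the sequence (a_r/b_r)^n tends to 0. -/

import Mathlib

/-- Bernoulli-type bound: `2 n^n ≤ (n+1)^n` for `n ≥ 1`. -/
lemma stmt18_aux1 (n : ℕ) (hn : 1 ≤ n) : 2 * n ^ n ≤ (n + 1) ^ n := by
  have hn0 : (0 : ℝ) < n := by exact_mod_cast hn
  have h1 : (2 : ℝ) ≤ (1 + 1 / n) ^ n := by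
    have h := one_add_mul_le_pow
      (le_trans (by norm_num) (by positivity : (0:ℝ) ≤ 1 / n)) n
    have e : (1 : ℝ) + n * (1 / n) = 2 := by rw [mul_one_div, div_self hn0.ne']; norm_num
    linarith [e ▸ h]
  have h2 : (2 : ℝ) * n ^ n ≤ (n + 1) ^ n := by
    calc (2:ℝ) * n ^ n ≤ (1 + 1/n)^n * n^n :=
          mul_le_mul_of_nonneg_right h1 (le_of_lt (pow_pos hn0 n))
      _ = ((1 + 1/n) * n)^n := (mul_pow _ _ _).symm
      _ = (n + 1)^n := by rw [show ((1:ℝ) + 1/n) * n = n + 1 by field_simp]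
  exact_mod_cast h2

/-- `4^m (m!)^2 ≤ (m+1)^(2m)`. -/
lemma stmt18_aux2 (m : ℕ) : 4 ^ m * (Nat.factorial m) ^ 2 ≤ (m + 1) ^ (2 * m) := by
  induction m with
  | zero => simp
  | succ n ih =>
    have h1 := stmt18_aux1 (n + 1) (Nat.le_add_left 1 n)
    calc 4 ^ (n+1) * (Nat.factorial (n+1)) ^ 2
        = (4 * (n+1)^2) * (4 ^ n * (Nat.factorial n) ^ 2) := by
          rw [Nat.factorial_succ]; ring
      _ ≤ (4 * (n+1)^2) * (n + 1) ^ (2 * n) := Nat.mul_le_mul_left _ ih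
      _ = (2 * (n+1)^(n+1)) ^ 2 := by ring
      _ ≤ ((n + 2) ^ (n+1)) ^ 2 := Nat.pow_le_pow_left h1 2
      _ = (n + 2) ^ (2 * (n+1)) := by ring

lemma stmt18_key (m : ℕ) (hm : 1 ≤ m) :
    2 ^ (m + 5) * (m + 2) ^ 2 < 4 ^ m * (m + 1) ^ 8 := by
  have h3 : (m + 2) ^ 2 < (m + 1) ^ 4 := by nlinarith [hm, sq_nonneg m]
  have h4 : 2 ^ (m + 5) ≤ 4 ^ m * 16 := by
    have h2m : 2 ≤ 2 ^ m := by
      calc 2 = 2 ^ 1 := rfl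
        _ ≤ 2 ^ m := Nat.pow_le_pow_right (by norm_num) hm
    calc 2 ^ (m + 5) = 2 ^ m * 2 * 16 := by ring
      _ ≤ 2 ^ m * 2 ^ m * 16 := Nat.mul_le_mul_right _ (Nat.mul_le_mul_left _ h2m)
      _ = 4 ^ m * 16 := by rw [show (4:ℕ) = 2 * 2 from rfl, mul_pow]
  have h5 : (16 : ℕ) ≤ (m + 1) ^ 4 := by
    calc (16:ℕ) = 2 ^ 4 := by norm_num
      _ ≤ (m + 1) ^ 4 := Nat.pow_le_pow_left (by omega) 4
  calc 2 ^ (m + 5) * (m + 2) ^ 2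
      < 2 ^ (m + 5) * (m + 1) ^ 4 :=
        mul_lt_mul_of_pos_left h3 (pow_pos (by norm_num) _)
    _ ≤ (4 ^ m * 16) * (m + 1) ^ 4 := Nat.mul_le_mul_right _ h4
    _ ≤ 4 ^ m * ((m+1)^4 * (m + 1) ^ 4) := by
        rw [mul_assoc]; exact Nat.mul_le_mul_left _ (Nat.mul_le_mul_right _ h5)
    _ = 4 ^ m * (m + 1) ^ 8 := by ring

lemma stmt18_l3 (m : ℕ) (hm : 1 ≤ m) :
    2 ^ (m + 5) * (m ^ (m + 5) * (m + 3) ^ (m + 5)) * (Nat.factorial m) ^ 2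
      < (m + 1) ^ (2 * m + 8) * (m + 2) ^ (2 * m + 8) := by
  have h4pos : 0 < 4 ^ m := pow_pos (by norm_num) _
  rw [← Nat.mul_lt_mul_left h4pos]
  have step1 : m ^ (m + 5) * (m + 3) ^ (m + 5) ≤ (m + 2) ^ (2 * m + 10) := by
    calc m ^ (m + 5) * (m + 3) ^ (m + 5) = (m * (m + 3)) ^ (m + 5) := (mul_pow _ _ _).symm
      _ ≤ ((m + 2) ^ 2) ^ (m + 5) := Nat.pow_le_pow_left (by nlinarith) _
      _ = (m + 2) ^ (2 * m + 10) := by rw [← pow_mul, show 2 * (m + 5) = 2 * m + 10 from by ring]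
  calc 4 ^ m * (2 ^ (m + 5) * (m ^ (m + 5) * (m + 3) ^ (m + 5)) * (Nat.factorial m) ^ 2)
      = 2 ^ (m + 5) * (m ^ (m + 5) * (m + 3) ^ (m + 5)) * (4 ^ m * (Nat.factorial m) ^ 2) := by
        ring
    _ ≤ 2 ^ (m + 5) * (m + 2) ^ (2 * m + 10) * (m + 1) ^ (2 * m) :=
        Nat.mul_le_mul (Nat.mul_le_mul_left _ step1) (stmt18_aux2 m)
    _ = (2 ^ (m + 5) * (m + 2) ^ 2) * ((m + 2) ^ (2 * m + 8) * (m + 1) ^ (2 * m)) := by ring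
    _ < (4 ^ m * (m + 1) ^ 8) * ((m + 2) ^ (2 * m + 8) * (m + 1) ^ (2 * m)) :=
        mul_lt_mul_of_pos_right (stmt18_key m hm)
          (Nat.mul_pos (pow_pos (by omega) _) (pow_pos (by omega) _))
    _ = 4 ^ m * ((m + 1) ^ (2 * m + 8) * (m + 2) ^ (2 * m + 8)) := by ring

/-- The key integer inequality `(2m (m!)² (m+3)!)^(m+5) < ((m+2)!)^(3m+13)`. -/
lemma stmt18_l4 (m : ℕ) (hm : 1 ≤ m) :
    (2 * m * (Nat.factorial m) ^ 2 * Nat.factorial (m + 3)) ^ (m + 5)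
      < (Nat.factorial (m + 2)) ^ (3 * m + 13) := by
  have e3 : Nat.factorial (m + 3) = (m + 3) * (m + 2) * (m + 1) * Nat.factorial m := by
    simp [Nat.factorial_succ]; ring
  have e2 : Nat.factorial (m + 2) = (m + 2) * (m + 1) * Nat.factorial m := by
    simp [Nat.factorial_succ]; ring
  rw [e3, e2]
  have Fpos : 0 < Nat.factorial m := Nat.factorial_pos m
  set F := Nat.factorial m with hF
  have h := stmt18_l3 m hm
  calc (2 * m * F ^ 2 * ((m + 3) * (m + 2) * (m + 1) * F)) ^ (m + 5)
      = (2 ^ (m + 5) * (m ^ (m + 5) * (m + 3) ^ (m + 5)) * F ^ 2)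
          * ((m + 1) ^ (m + 5) * (m + 2) ^ (m + 5) * F ^ (3 * m + 13)) := by
        simp only [mul_pow]; ring
    _ < ((m + 1) ^ (2 * m + 8) * (m + 2) ^ (2 * m + 8))
          * ((m + 1) ^ (m + 5) * (m + 2) ^ (m + 5) * F ^ (3 * m + 13)) :=
        mul_lt_mul_of_pos_right h (by positivity)
    _ = ((m + 2) * (m + 1) * F) ^ (3 * m + 13) := by
        simp only [mul_pow]; ring

/-- For `r ≥ 5`, `a_r < b_r` and hence `(a_r / b_r)^n → 0`, i.e.
`a_r^n = o(b_r^n)`. -/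
theorem stmt18 (r : ℕ) (hr : 5 ≤ r)
    (a b : ℝ)
    (ha : a = ((2 * (r : ℝ) - 8) * ((Nat.factorial (r - 4) : ℝ))^2
        * (Nat.factorial (r - 1) : ℝ)) ^ ((1 : ℝ) / (3 * (r : ℝ) + 1)))
    (hb : b = ((Nat.factorial (r - 2) : ℝ)) ^ ((1 : ℝ) / ((r : ℝ) + 1))) :
    a < b ∧ Filter.Tendsto (fun n : ℕ => (a / b) ^ n) Filter.atTop (nhds 0) := by
  obtain ⟨m, rfl⟩ : ∃ m, r = m + 4 := ⟨r - 4, by omega⟩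
  have hm : 1 ≤ m := by omega
  rw [show m + 4 - 4 = m from by omega, show m + 4 - 1 = m + 3 from by omega] at ha
  rw [show m + 4 - 2 = m + 2 from by omega] at hb
  set A : ℝ := ((2 * m * (Nat.factorial m) ^ 2 * Nat.factorial (m + 3) : ℕ) : ℝ) with hA
  set B : ℝ := ((Nat.factorial (m + 2) : ℕ) : ℝ) with hB
  have hApos : (0 : ℝ) < A := by
    rw [hA]
    have : 0 < 2 * m * (Nat.factorial m) ^ 2 * Nat.factorial (m + 3) := by positivity
    exact_mod_cast this
  have hBpos : (0 : ℝ) < B := by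
    rw [hB]; exact_mod_cast Nat.factorial_pos (m + 2)
  have haA : a = A ^ ((1 : ℝ) / (3 * (m : ℝ) + 13)) := by
    rw [ha, hA]; congr 1
    · push_cast; ring
    · push_cast; ring
  have hbB : b = B ^ ((1 : ℝ) / ((m : ℝ) + 5)) := by
    rw [hb, hB]; congr 1
    push_cast; ring
  have hAB : A ^ (m + 5) < B ^ (3 * m + 13) := by
    rw [hA, hB]; exact_mod_cast stmt18_l4 m hm
  have ha' : 0 < a := by rw [haA]; positivity
  have hb' : 0 < b := by rw [hbB]; positivity
  have hlog : Real.log a < Real.log b := by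
    rw [haA, hbB, Real.log_rpow hApos, Real.log_rpow hBpos, one_div, one_div,
      inv_mul_eq_div, inv_mul_eq_div]
    rw [div_lt_div_iff₀ (by positivity) (by positivity)]
    have h2 := Real.log_lt_log (pow_pos hApos _) hAB
    rw [Real.log_pow, Real.log_pow] at h2
    push_cast at h2
    linarith
  have hab : a < b := by
    have h := Real.exp_lt_exp.mpr hlog
    rwa [Real.exp_log ha', Real.exp_log hb'] at h
  refine ⟨hab, ?_⟩
  exact tendsto_pow_atTop_nhds_zero_of_lt_one (by positivity) ((div_lt_one hb').mpr hab)
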